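/- Let X and Y be compact metric spaces and π : X → Y a continuous surjective semiopen map. Then the set of open points of π is residual in X. -/

import Mathlib

open Filter Topology Set

/-- A map between topological spaces is *semiopen* if the image of every
nonempty open set has nonempty interior. -/
def SemiOpen {X Y : Type*} [TopologicalSpace X] [TopologicalSpace Y] (f : X → Y) : Prop :=
  ∀ U : Set X, IsOpen U → U.Nonempty → (interior (f '' U)).Nonempty

/-- The `n`-th iterate (`n : ℤ`) of a homeomorphism. -/
def zIter {X : Type*} [TopologicalSpace X] (T : X ≃ₜ X) (n : ℤ) : X → X :=
  fun x => (T.toEquiv ^ n) x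

/-- The two-sided orbit of a point under a homeomorphism. -/
def zOrbit {X : Type*} [TopologicalSpace X] (T : X ≃ₜ X) (x : X) : Set X :=
  Set.range fun n : ℤ => zIter T n x

/-- A system is minimal if every orbit is dense. -/
def IsMinimalSystem {X : Type*} [TopologicalSpace X] (T : X ≃ₜ X) : Prop :=
  ∀ x : X, Dense (zOrbit T x)

/-- A minimal subset: nonempty, closed, invariant, with no proper nonempty
closed invariant subset. -/
def IsMinimalSubset {X : Type*} [TopologicalSpace X] (T : X ≃ₜ X) (M : Set X) : Prop :=
  M.Nonempty ∧ IsClosed M ∧ T '' M = M ∧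
    ∀ M' ⊆ M, M'.Nonempty → IsClosed M' → T '' M' = M' → M' = M

/-- A factor map between systems. -/
def IsFactorMap {X Y : Type*} [TopologicalSpace X] [TopologicalSpace Y]
    (T : X ≃ₜ X) (S : Y ≃ₜ Y) (f : X → Y) : Prop :=
  Continuous f ∧ Function.Surjective f ∧ ∀ x, f (T x) = S (f x)

/-- The regionally proximal relation. -/
def RP {X : Type*} [MetricSpace X] (T : X ≃ₜ X) : Set (X × X) :=
  {p | ∃ (u v : ℕ → X) (n : ℕ → ℤ),
    Tendsto u atTop (𝓝 p.1) ∧ Tendsto v atTop (𝓝 p.2) ∧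
    Tendsto (fun i => dist (zIter T (n i) (u i)) (zIter T (n i) (v i))) atTop (𝓝 0)}

/-- A joining of two systems: a closed invariant subset of the product with
full projections onto both coordinates. -/
def IsJoining {X Y : Type*} [TopologicalSpace X] [TopologicalSpace Y]
    (T : X ≃ₜ X) (S : Y ≃ₜ Y) (J : Set (X × Y)) : Prop :=
  IsClosed J ∧ (T.prodCongr S) '' J = J ∧
    Prod.fst '' J = Set.univ ∧ Prod.snd '' J = Set.univ

/-- `J` projects onto `X_eq × Y_eq`: phrased via the regionally proximal
relation, every product of RP-cells meets `J`. -/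
def FullEqProjection {X Y : Type*} [MetricSpace X] [MetricSpace Y]
    (T : X ≃ₜ X) (S : Y ≃ₜ Y) (J : Set (X × Y)) : Prop :=
  ∀ x : X, ∀ y : Y, ∃ p ∈ J, (x, p.1) ∈ RP T ∧ (y, p.2) ∈ RP S

/-- Two minimal systems are quasi-disjoint if the full product is the only
joining projecting onto the product of the maximal equicontinuous factors. -/
def QuasiDisjoint {X Y : Type*} [MetricSpace X] [MetricSpace Y]
    (T : X ≃ₜ X) (S : Y ≃ₜ Y) : Prop :=
  ∀ J : Set (X × Y), IsJoining T S J → FullEqProjection T S J → J = Set.univ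

/-- Two systems are disjoint if the full product is the only joining. -/
def DisjointSystems {X Y : Type*} [TopologicalSpace X] [TopologicalSpace Y]
    (T : X ≃ₜ X) (S : Y ≃ₜ Y) : Prop :=
  ∀ J : Set (X × Y), IsJoining T S J → J = Set.univ

/-- A system is equicontinuous (with respect to all integer iterates). -/
def EquicontinuousSystem {X : Type*} [MetricSpace X] (T : X ≃ₜ X) : Prop :=
  ∀ ε > (0 : ℝ), ∃ δ > (0 : ℝ), ∀ x₁ x₂ : X, dist x₁ x₂ < δ →
    ∀ n : ℤ, dist (zIter T n x₁) (zIter T n x₂) < ε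

/-- A pair of points is proximal. -/
def ProximalPair {X : Type*} [MetricSpace X] (T : X ≃ₜ X) (x₁ x₂ : X) : Prop :=
  ∀ ε > (0 : ℝ), ∃ n : ℤ, dist (zIter T n x₁) (zIter T n x₂) < ε

/-- the set of open points of a continuous surjective semiopen
map between compact metric spaces is residual. -/
theorem stmt1 {X Y : Type*} [MetricSpace X] [CompactSpace X]
    [MetricSpace Y] [CompactSpace Y] (π : X → Y)
    (hcont : Continuous π) (hsurj : Function.Surjective π) (hsemi : SemiOpen π) :
    {x : X | ∀ U ∈ 𝓝 x, π x ∈ interior (π '' U)} ∈ residual X := by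
  set G : ℕ → Set X := fun n =>
    ⋃ V ∈ {V : Set X | IsOpen V ∧ Metric.diam V ≤ 1 / (n + 1)},
      V ∩ π ⁻¹' (interior (π '' V)) with hG
  have hopen : ∀ n, IsOpen (G n) := fun n =>
    isOpen_biUnion fun V hV => hV.1.inter (isOpen_interior.preimage hcont)
  have hdense : ∀ n, Dense (G n) := by
    intro n
    rw [dense_iff_inter_open]
    rintro W hW ⟨z, hz⟩
    obtain ⟨ε, hε, hball⟩ := Metric.isOpen_iff.1 hW z hz
    have hn1 : (0 : ℝ) < 1 / (2 * (n + 1)) := by positivity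
    set r := min (ε / 2) (1 / (2 * (n + 1))) with hr_def
    have hr : 0 < r := lt_min (by positivity) hn1
    set V := Metric.ball z r with hV_def
    have hVd : Metric.diam V ≤ 1 / (n + 1) := by
      refine (Metric.diam_ball hr.le).trans ?_
      have : r ≤ 1 / (2 * (n + 1)) := min_le_right _ _
      have h2 : 1 / (2 * ((n:ℝ) + 1)) = (1 / ((n:ℝ) + 1)) / 2 := by
        rw [div_div]; ring_nf
      linarith
    have hVsubW : V ⊆ W := fun y hy =>
      hball (lt_of_lt_of_le (Metric.mem_ball.1 hy)
        ((min_le_left _ _).trans (by linarith)))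
    obtain ⟨y, hy⟩ := hsemi V Metric.isOpen_ball ⟨z, Metric.mem_ball_self hr⟩
    obtain ⟨x, hxV, hxy⟩ := interior_subset hy
    refine ⟨x, hVsubW hxV, ?_⟩
    refine Set.mem_biUnion ⟨Metric.isOpen_ball, hVd⟩ ⟨hxV, ?_⟩
    show π x ∈ interior (π '' V)
    rw [hxy]; exact hy
  have hmem : (⋂ n, G n) ∈ residual X :=
    countable_iInter_mem.2 fun n => residual_of_dense_open (hopen n) (hdense n)
  refine Filter.mem_of_superset hmem ?_
  intro x hx U hU
  obtain ⟨ε, hε, hball⟩ := Metric.mem_nhds_iff.1 hU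
  obtain ⟨n, hn⟩ := exists_nat_one_div_lt hε
  have hxn := Set.mem_iInter.1 hx n
  simp only [hG, Set.mem_iUnion, Set.mem_setOf_eq] at hxn
  obtain ⟨V, ⟨hVopen, hVd⟩, hxV, hxint⟩ := hxn
  have hb : Bornology.IsBounded V :=
    (isCompact_univ.isBounded).subset (Set.subset_univ V)
  have hVsub : V ⊆ U := fun y hy =>
    hball (Metric.mem_ball.2 (lt_of_le_of_lt
      (le_trans (Metric.dist_le_diam_of_mem hb hy hxV) hVd) hn))
  exact interior_mono (Set.image_mono hVsub) hxint
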